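/- Let G be an ordered graph on [n] and let a, b ∈ [n] with a < b. If G − a = G − b, then the interval [a,b] = {w : a ≤ w ≤ b} is a semi-homogeneous block in G. -/

import Mathlib

namespace OrderedGraphs

/-- The order-preserving map `Fin (n-1) → Fin n` that skips the vertex `v`. -/
def delMap {n : ℕ} (v : Fin n) (i : Fin (n - 1)) : Fin n :=
  if h : (i : ℕ) < (v : ℕ) then ⟨i, lt_trans h v.isLt⟩
  else ⟨(i : ℕ) + 1, by have h1 := i.isLt; have h2 := v.isLt; omega⟩

/-- `erase G v` is the ordered graph `G − v` on `[n-1]`, obtained by deleting `v` and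
relabelling the remaining vertices order-preservingly. -/
def erase {n : ℕ} (G : SimpleGraph (Fin n)) (v : Fin n) : SimpleGraph (Fin (n - 1)) where
  Adj i j := G.Adj (delMap v i) (delMap v j)
  symm := ⟨by intro i j h; exact G.adj_symm h⟩
  loopless := ⟨by intro i h; exact G.irrefl h⟩

/-- The shadow `∂G` of a single ordered graph. -/
def shadow {n : ℕ} (G : SimpleGraph (Fin n)) : Set (SimpleGraph (Fin (n - 1))) :=
  {H | ∃ v : Fin n, H = erase G v}

/-- The shadow `∂𝒢` of a collection of ordered graphs. -/
def shadowCol {n : ℕ} (𝒢 : Set (SimpleGraph (Fin n))) : Set (SimpleGraph (Fin (n - 1))) :=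
  ⋃ G ∈ 𝒢, shadow G

/-- `x ∼ y` : the relation `Γ(x) \ {y} = Γ(y) \ {x}`. -/
def simRel {n : ℕ} (G : SimpleGraph (Fin n)) (x y : Fin n) : Prop :=
  G.neighborSet x \ {y} = G.neighborSet y \ {x}

/-- A set of consecutive vertices whose elements are pairwise `∼`-equivalent. -/
def IsHomInterval {n : ℕ} (G : SimpleGraph (Fin n)) (B : Set (Fin n)) : Prop :=
  B.OrdConnected ∧ ∀ x ∈ B, ∀ y ∈ B, simRel G x y

/-- A homogeneous block: a maximal nonempty set of consecutive vertices whose elements are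
pairwise `∼`-equivalent. -/
def IsHomBlock {n : ℕ} (G : SimpleGraph (Fin n)) (B : Set (Fin n)) : Prop :=
  B.Nonempty ∧ IsHomInterval G B ∧ ∀ C, IsHomInterval G C → B ⊆ C → B = C

open Classical in
/-- The excess `m(G) = Σ_{B : |B| ≥ 3} (|B| − 2)`, the sum over homogeneous blocks;
(truncated ℕ-subtraction makes blocks with `|B| ≤ 2` contribute `0`). -/
noncomputable def excess {n : ℕ} (G : SimpleGraph (Fin n)) : ℕ :=
  ∑ B ∈ Finset.univ.filter (fun B : Finset (Fin n) => IsHomBlock G ↑B), (B.card - 2)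

/-- Two ordered graphs have the same type. -/
def SameType {n n' : ℕ} (G : SimpleGraph (Fin n)) (G' : SimpleGraph (Fin n')) : Prop :=
  ∃ (k : ℕ) (B : Fin k → Set (Fin n)) (B' : Fin k → Set (Fin n')),
    (∀ i, IsHomBlock G (B i)) ∧ (∀ C, IsHomBlock G C → ∃ i, C = B i) ∧
    (∀ i j : Fin k, i < j → ∀ x ∈ B i, ∀ y ∈ B j, x < y) ∧
    (∀ i, IsHomBlock G' (B' i)) ∧ (∀ C, IsHomBlock G' C → ∃ i, C = B' i) ∧
    (∀ i j : Fin k, i < j → ∀ x ∈ B' i, ∀ y ∈ B' j, x < y) ∧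
    (∀ i j : Fin k, (∀ u ∈ B i, ∀ v ∈ B j, u ≠ v → G.Adj u v) ↔
            (∀ u ∈ B' i, ∀ v ∈ B' j, u ≠ v → G'.Adj u v)) ∧
    (∀ i, (B i).ncard = 1 ↔ (B' i).ncard = 1)

/-- The shadow within types `∂_τ G`. -/
def typeShadow {n : ℕ} (G : SimpleGraph (Fin n)) : Set (SimpleGraph (Fin (n - 1))) :=
  {H ∈ shadow G | SameType H G}

/-- The shadow within types `∂_τ 𝒢` of a collection. -/
def typeShadowCol {n : ℕ} (𝒢 : Set (SimpleGraph (Fin n))) : Set (SimpleGraph (Fin (n - 1))) :=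
  ⋃ G ∈ 𝒢, typeShadow G

/-- `Z^d(n) = {x ∈ ℤ^d : x_i ≥ 0, Σ_i x_i = n}`. -/
def Zdn (d n : ℕ) : Set (Fin d → ℤ) := {x | (∀ i, 0 ≤ x i) ∧ ∑ i, x i = (n : ℤ)}

/-- A line in `Z^d(n)`, determined by two coordinates `j, k`. -/
def ZLine (d n : ℕ) (j k : Fin d) : Set (Fin d → ℤ) :=
  {x ∈ Zdn d n | ∀ i, i ≠ j → i ≠ k → x i = 0}

/-- The shadow of a subset `A ⊆ Z^d(n)`. -/
def Zshadow (d n : ℕ) (A : Set (Fin d → ℤ)) : Set (Fin d → ℤ) :=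
  {x ∈ Zdn d (n - 1) | ∃ y ∈ A, ∀ i, x i ≤ y i}

/-- `phiAt G d x` : `x ∈ ℤ^d` is the image `φ(G)` of `G`, i.e. the homogeneous blocks of `G`
of size at least `2`, in increasing order, are `B_1 < ⋯ < B_d` and `x i = |B_i| − 2`. -/
def phiAt {n : ℕ} (G : SimpleGraph (Fin n)) (d : ℕ) (x : Fin d → ℤ) : Prop :=
  ∃ B : Fin d → Set (Fin n),
    (∀ i, IsHomBlock G (B i) ∧ 2 ≤ (B i).ncard) ∧
    (∀ C, IsHomBlock G C → 2 ≤ C.ncard → ∃ i, C = B i) ∧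
    (∀ i j : Fin d, i < j → ∀ u ∈ B i, ∀ v ∈ B j, u < v) ∧
    (∀ i, x i = ((B i).ncard : ℤ) - 2)

/-- `𝒢₀` (a set of ordered graphs of a common type, of common excess `m`) contains a line:
some subset `S ⊆ 𝒢₀` has `φ(S)` equal to a line in `Z^d(m)`. -/
def ContainsLine {n : ℕ} (𝒢₀ : Set (SimpleGraph (Fin n))) (m : ℕ) : Prop :=
  ∃ S ⊆ 𝒢₀, ∃ (d : ℕ) (j k : Fin d),
    {x : Fin d → ℤ | ∃ G ∈ S, phiAt G d x} = ZLine d m j k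

/-- `eraseSet G X` is `G − X`: delete all vertices of `X` and relabel order-preservingly. -/
noncomputable def eraseSet {n : ℕ} (G : SimpleGraph (Fin n)) (X : Finset (Fin n)) :
    SimpleGraph (Fin (n - X.card)) where
  Adj i j := G.Adj ((Xᶜ.orderIsoOfFin (by rw [Finset.card_compl, Fintype.card_fin]) i) : Fin n)
                   ((Xᶜ.orderIsoOfFin (by rw [Finset.card_compl, Fintype.card_fin]) j) : Fin n)
  symm := ⟨by intro i j h; exact G.adj_symm h⟩
  loopless := ⟨by intro i h; exact G.irrefl h⟩

/-- A semi-homogeneous block: a set `B` of consecutive vertices such that all vertices of `B`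
have the same neighbourhood outside `B`, and, for some `L ⊆ ℕ`, two vertices `x, y ∈ B` are
adjacent iff `|x − y| ∈ L`. -/
def IsSemiHomBlock {n : ℕ} (G : SimpleGraph (Fin n)) (B : Set (Fin n)) : Prop :=
  B.OrdConnected ∧
  (∀ x ∈ B, ∀ y ∈ B, G.neighborSet x \ B = G.neighborSet y \ B) ∧
  ∃ L : Set ℕ, ∀ x ∈ B, ∀ y ∈ B, (G.Adj x y ↔ ((x : ℤ) - (y : ℤ)).natAbs ∈ L)


/-- Natural-number level adjacency. -/
def adjN {n : ℕ} (G : SimpleGraph (Fin n)) (x y : ℕ) : Prop :=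
  ∃ (hx : x < n) (hy : y < n), G.Adj ⟨x, hx⟩ ⟨y, hy⟩

lemma adjN_iff {n : ℕ} (G : SimpleGraph (Fin n)) {x y : ℕ} (hx : x < n) (hy : y < n) :
    adjN G x y ↔ G.Adj ⟨x, hx⟩ ⟨y, hy⟩ :=
  ⟨fun ⟨_, _, h⟩ => h, fun h => ⟨hx, hy, h⟩⟩

lemma delMap_pair {n : ℕ} (a b : Fin n) (hab : a < b) (x : ℕ) (hx : x < n)
    (hxa : x ≠ (a : ℕ)) :
    ∃ i : Fin (n - 1), delMap a i = ⟨x, hx⟩ ∧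
      delMap b i = ⟨if (a : ℕ) < x ∧ x ≤ (b : ℕ) then x - 1 else x,
        by split <;> omega⟩ := by
  have ha := a.isLt
  have hb := b.isLt
  have hab' : (a : ℕ) < (b : ℕ) := hab
  refine ⟨⟨if x < (a : ℕ) then x else x - 1, by split <;> omega⟩, ?_, ?_⟩ <;>
    · simp only [delMap]
      split_ifs <;> first
        | rfl
        | (exfalso; omega)
        | (apply Fin.ext; simp; omega)
        | (apply Fin.ext; simp; split <;> omega)

lemma key {n : ℕ} (G : SimpleGraph (Fin n)) (a b : Fin n) (hab : a < b)
    (h : erase G a = erase G b) (x y : ℕ) (hx : x < n) (hy : y < n)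
    (hxa : x ≠ (a : ℕ)) (hya : y ≠ (a : ℕ)) :
    adjN G x y ↔ adjN G (if (a : ℕ) < x ∧ x ≤ (b : ℕ) then x - 1 else x)
      (if (a : ℕ) < y ∧ y ≤ (b : ℕ) then y - 1 else y) := by
  obtain ⟨i, hia, hib⟩ := delMap_pair a b hab x hx hxa
  obtain ⟨j, hja, hjb⟩ := delMap_pair a b hab y hy hya
  have H : (erase G a).Adj i j ↔ (erase G b).Adj i j := by rw [h]
  have H' : G.Adj (delMap a i) (delMap a j) ↔ G.Adj (delMap b i) (delMap b j) := H
  rw [hia, hja, hib, hjb] at H'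
  rw [adjN_iff G hx hy, adjN_iff G (by split <;> omega) (by split <;> omega)]
  exact H'

lemma shiftPair {n : ℕ} (G : SimpleGraph (Fin n)) (a b : Fin n) (hab : a < b)
    (h : erase G a = erase G b) :
    ∀ k x y : ℕ, x = (a : ℕ) + k → x ≤ y → y ≤ (b : ℕ) →
      (adjN G x y ↔ adjN G (a : ℕ) ((a : ℕ) + (y - x))) := by
  have hb := b.isLt
  intro k
  induction k with
  | zero =>
    intro x y hxk hxy hyb
    rw [show (a : ℕ) + (y - x) = y by omega, show x = (a : ℕ) by omega]
  | succ k ih =>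
    intro x y hxk hxy hyb
    have hxn : x < n := by omega
    have hyn : y < n := by omega
    have h1 := key G a b hab h x y hxn hyn (by omega) (by omega)
    rw [if_pos (by omega : (a : ℕ) < x ∧ x ≤ (b : ℕ)),
        if_pos (by omega : (a : ℕ) < y ∧ y ≤ (b : ℕ))] at h1
    rw [h1, ih (x - 1) (y - 1) (by omega) (by omega) (by omega),
        show (a : ℕ) + (y - 1 - (x - 1)) = (a : ℕ) + (y - x) by omega]

lemma outside {n : ℕ} (G : SimpleGraph (Fin n)) (a b : Fin n) (hab : a < b)
    (h : erase G a = erase G b) :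
    ∀ k x z : ℕ, x = (a : ℕ) + k → x ≤ (b : ℕ) → z < n →
      (z < (a : ℕ) ∨ (b : ℕ) < z) → (adjN G x z ↔ adjN G (a : ℕ) z) := by
  have hb := b.isLt
  intro k
  induction k with
  | zero =>
    intro x z hxk _ _ _
    rw [show x = (a : ℕ) by omega]
  | succ k ih =>
    intro x z hxk hxb hzn hz
    have hxn : x < n := by omega
    have h1 := key G a b hab h x z hxn hzn (by omega) (by omega)
    rw [if_pos (by omega : (a : ℕ) < x ∧ x ≤ (b : ℕ)),
        if_neg (by omega : ¬((a : ℕ) < z ∧ z ≤ (b : ℕ)))] at h1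
    rw [h1, ih (x - 1) z (by omega) (by omega) hzn hz]

/-- **Lemma (semi-homogeneous blocks).** If `a < b` and `G − a = G − b`, then the interval
`[a, b]` is a semi-homogeneous block in `G`. -/
theorem semi_hom_block (n : ℕ) (G : SimpleGraph (Fin n)) (a b : Fin n) (hab : a < b)
    (h : erase G a = erase G b) :
    IsSemiHomBlock G (Set.Icc a b) := by
  have hab' : (a : ℕ) < (b : ℕ) := hab
  refine ⟨Set.ordConnected_Icc, ?_, ?_⟩
  · have aux : ∀ x ∈ Set.Icc a b,
        G.neighborSet x \ Set.Icc a b = G.neighborSet a \ Set.Icc a b := by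
      intro x hx
      rw [Set.mem_Icc] at hx
      ext z
      simp only [Set.mem_diff, SimpleGraph.mem_neighborSet]
      refine and_congr_left fun hz => ?_
      have hz' : (z : ℕ) < (a : ℕ) ∨ (b : ℕ) < (z : ℕ) := by
        simp only [Set.mem_Icc, not_and_or, not_le] at hz
        exact hz.imp Fin.lt_def.mp Fin.lt_def.mp
      have hax : (a : ℕ) ≤ (x : ℕ) := hx.1
      have hxb : (x : ℕ) ≤ (b : ℕ) := hx.2
      have h1 := outside G a b hab h ((x : ℕ) - (a : ℕ)) (x : ℕ) (z : ℕ)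
        (by omega) hxb z.isLt hz'
      rw [adjN_iff G x.isLt z.isLt, adjN_iff G a.isLt z.isLt] at h1
      exact h1
    intro x hx y hy
    rw [aux x hx, aux y hy]
  · refine ⟨{d | adjN G (a : ℕ) ((a : ℕ) + d)}, ?_⟩
    intro x hx y hy
    rw [Set.mem_Icc] at hx hy
    have hax : (a : ℕ) ≤ (x : ℕ) := hx.1
    have hxb : (x : ℕ) ≤ (b : ℕ) := hx.2
    have hay : (a : ℕ) ≤ (y : ℕ) := hy.1
    have hyb : (y : ℕ) ≤ (b : ℕ) := hy.2
    rcases le_total (x : ℕ) (y : ℕ) with hxy | hxy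
    · have hd : ((x : ℤ) - (y : ℤ)).natAbs = (y : ℕ) - (x : ℕ) := by omega
      have h1 := shiftPair G a b hab h ((x : ℕ) - (a : ℕ)) (x : ℕ) (y : ℕ)
        (by omega) hxy hyb
      rw [adjN_iff G x.isLt y.isLt] at h1
      rw [hd]
      exact h1
    · have hd : ((x : ℤ) - (y : ℤ)).natAbs = (x : ℕ) - (y : ℕ) := by omega
      have h1 := shiftPair G a b hab h ((y : ℕ) - (a : ℕ)) (y : ℕ) (x : ℕ)
        (by omega) hxy hxb
      rw [adjN_iff G y.isLt x.isLt] at h1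
      rw [hd, G.adj_comm]
      exact h1

end OrderedGraphs
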